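/- Let X be a topological space, x₀ ∈ X, and 0 < a < λ₀ < b. Let G : X × [0,b] → ℝ satisfy: (i) G is jointly continuous on X × [0,b]; (ii) the partial derivative ∂G/∂λ exists at every point of X × (0,b) and is jointly continuous there; (iii) for every x ∈ X, the function λ ↦ G(x,λ) is concave on every closed subinterval of (0,b) on which it is nonnegative; (iv) G(x,λ) > 0 for all x ∈ X and all λ ∈ (0,a]; (v) G(x₀,λ) > 0 for all λ ∈ (0,λ₀) and G(x₀,λ₀) = 0. Then for every δ > 0 with a < λ₀ − δ and λ₀ + δ < b, there exists an open neighborhood O of x₀ such that for every x ∈ O there exists λ*(x) ∈ (λ₀ − δ, λ₀ + δ) with G(x, λ*(x)) = 0 and G(x,λ) > 0 for all λ ∈ (0, λ*(x)). In particular, the first positive zero of G(x,·) exists for x near x₀ and depends continuously on x at x₀. -/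

import Mathlib

/-- Analytic core of Lemma 1: continuity of the first positive zero (first
conjugate point) under perturbation of parameters. Here `G : X → ℝ → ℝ` is
jointly continuous on `X × [0,b]`, has jointly continuous partial
`λ`-derivative on `X × (0,b)`, is concave in `λ` on each closed subinterval of
`(0,b)` where it is nonnegative, is positive on `(0,a]` for every parameter,
and `G x₀` is positive on `(0,λ₀)` with `G x₀ λ₀ = 0` where `0 < a < λ₀ < b`.
Then for every small `δ > 0` there is a neighborhood `O` of `x₀` such that for
each `x ∈ O` the function `G x` has its first positive zero in
`(λ₀ − δ, λ₀ + δ)`. -/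
theorem first_zero_continuous {X : Type*} [TopologicalSpace X] (x0 : X)
    (a lam0 b : ℝ) (ha : 0 < a) (halam : a < lam0) (hlamb : lam0 < b)
    (G : X → ℝ → ℝ)
    (hcont : ContinuousOn (fun p : X × ℝ => G p.1 p.2)
      (Set.univ ×ˢ Set.Icc 0 b))
    (hdiff : ∀ x : X, ∀ l ∈ Set.Ioo (0 : ℝ) b, DifferentiableAt ℝ (G x) l)
    (hderiv_cont : ContinuousOn (fun p : X × ℝ => deriv (G p.1) p.2)
      (Set.univ ×ˢ Set.Ioo 0 b))
    (hconc : ∀ x : X, ∀ s t : ℝ, 0 < s → t < b →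
      (∀ l ∈ Set.Icc s t, 0 ≤ G x l) → ConcaveOn ℝ (Set.Icc s t) (G x))
    (hpos_a : ∀ x : X, ∀ l ∈ Set.Ioc (0 : ℝ) a, 0 < G x l)
    (hpos0 : ∀ l ∈ Set.Ioo (0 : ℝ) lam0, 0 < G x0 l)
    (hzero0 : G x0 lam0 = 0) :
    ∀ δ : ℝ, 0 < δ → a < lam0 - δ → lam0 + δ < b →
      ∃ O : Set X, IsOpen O ∧ x0 ∈ O ∧
        ∀ x ∈ O, ∃ lam : ℝ, lam ∈ Set.Ioo (lam0 - δ) (lam0 + δ) ∧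
          G x lam = 0 ∧ ∀ l ∈ Set.Ioo 0 lam, 0 < G x l := by
  intro δ hδ haδ hδb
  -- Step 1: concavity forces `G x0` to go strictly negative somewhere in `(lam0, lam0+δ)`.
  obtain ⟨s, hs, hGs⟩ : ∃ s ∈ Set.Ioo lam0 (lam0 + δ), G x0 s < 0 := by
    by_contra h
    push_neg at h
    set c := lam0 + δ / 2 with hc
    have hcmem : c ∈ Set.Ioo lam0 (lam0 + δ) := ⟨by simp [hc]; linarith, by simp [hc]; linarith⟩
    have hcb : c < b := by simp [hc]; linarith
    have hnonneg : ∀ l ∈ Set.Icc a c, 0 ≤ G x0 l := by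
      intro l hl
      rcases lt_trichotomy l lam0 with h1 | h1 | h1
      · exact le_of_lt (hpos0 l ⟨lt_of_lt_of_le ha hl.1, h1⟩)
      · rw [h1, hzero0]
      · exact h l ⟨h1, lt_of_le_of_lt hl.2 hcmem.2⟩
    have hK := hconc x0 a c ha hcb hnonneg
    have hac : a < c := lt_trans halam hcmem.1
    set θ := (c - lam0) / (c - a) with hθdef
    have hca : 0 < c - a := by linarith
    have hθ0 : 0 < θ := div_pos (by linarith [hcmem.1]) hca
    have hθ1 : θ < 1 := (div_lt_one hca).2 (by linarith)
    have hcomb : θ * a + (1 - θ) * c = lam0 := by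
      field_simp [hθdef]
      have hθm : θ * (c - a) = c - lam0 := by rw [hθdef]; exact div_mul_cancel₀ _ hca.ne'
      linarith
    have hcc := hK.2 (Set.left_mem_Icc.2 hac.le) (Set.right_mem_Icc.2 hac.le)
      hθ0.le (by linarith : (0:ℝ) ≤ 1 - θ) (by ring)
    rw [smul_eq_mul, smul_eq_mul, smul_eq_mul, smul_eq_mul, hcomb, hzero0] at hcc
    have hGa : 0 < G x0 a := hpos_a x0 a ⟨ha, le_refl a⟩
    have hGc : 0 ≤ G x0 c := h c hcmem
    nlinarith
  have hsb : s < b := lt_trans hs.2 hδb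
  have hs0 : 0 < s := lt_trans (lt_trans ha halam) hs.1
  -- Step 2: tube lemma gives uniform positivity on `[a, lam0 - δ]` near `x0`.
  have hcont' : ContinuousOn (fun p : X × ℝ => G p.1 p.2) (Set.univ ×ˢ Set.Ioo 0 b) :=
    hcont.mono (Set.prod_mono le_rfl Set.Ioo_subset_Icc_self)
  have hUopen : IsOpen ((Set.univ ×ˢ Set.Ioo 0 b) ∩
      (fun p : X × ℝ => G p.1 p.2) ⁻¹' Set.Ioi 0) :=
    hcont'.isOpen_inter_preimage (isOpen_univ.prod isOpen_Ioo) isOpen_Ioi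
  have hsub : ({x0} : Set X) ×ˢ Set.Icc a (lam0 - δ) ⊆
      (Set.univ ×ˢ Set.Ioo 0 b) ∩ (fun p : X × ℝ => G p.1 p.2) ⁻¹' Set.Ioi 0 := by
    rintro ⟨x, l⟩ ⟨hx, hl⟩
    simp only [Set.mem_singleton_iff] at hx
    subst hx
    have hl0 : 0 < l := lt_of_lt_of_le ha hl.1
    have hllam : l < lam0 := lt_of_le_of_lt hl.2 (by linarith)
    exact ⟨⟨trivial, hl0, by linarith⟩, hpos0 l ⟨hl0, hllam⟩⟩
  obtain ⟨u, v, hu, _, hx0u, hKv, huv⟩ :=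
    generalized_tube_lemma isCompact_singleton isCompact_Icc hUopen hsub
  -- `O₂`: where `G x s < 0`
  have hGscont : Continuous fun x => G x s := by
    rw [← continuousOn_univ]
    exact hcont.comp ((continuous_id.prodMk continuous_const).continuousOn)
      (fun x _ => ⟨trivial, hs0.le, hsb.le⟩)
  refine ⟨u ∩ {x | G x s < 0}, hu.inter (isOpen_lt hGscont continuous_const),
    ⟨hx0u rfl, hGs⟩, ?_⟩
  rintro x ⟨hxu, hxs⟩
  -- positivity of `G x` on `(0, lam0 - δ]`
  have hposK : ∀ l ∈ Set.Icc a (lam0 - δ), 0 < G x l := by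
    intro l hl
    exact (huv (Set.mem_prod.2 ⟨hxu, hKv hl⟩ : (x, l) ∈ u ×ˢ v)).2
  have hpos_small : ∀ l, 0 < l → l ≤ lam0 - δ → 0 < G x l := by
    intro l hl0 hl
    rcases le_or_gt l a with h1 | h1
    · exact hpos_a x l ⟨hl0, h1⟩
    · exact hposK l ⟨h1.le, hl⟩
  -- `G x` is continuous on `[lam0-δ, s]`
  have hp0 : (0:ℝ) < lam0 - δ := lt_trans ha haδ
  have hps : lam0 - δ ≤ s := by linarith [hs.1]
  have hgcont : ContinuousOn (G x) (Set.Icc (lam0 - δ) s) := by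
    have : ContinuousOn (G x) (Set.Icc 0 b) :=
      hcont.comp ((continuous_const.prodMk continuous_id).continuousOn)
        (fun l hl => ⟨trivial, hl⟩)
    exact this.mono (Set.Icc_subset_Icc hp0.le hsb.le)
  -- the first zero: infimum of the nonpositivity set
  set S : Set ℝ := Set.Icc (lam0 - δ) s ∩ (G x) ⁻¹' Set.Iic 0 with hSdef
  have hSclosed : IsClosed S := hgcont.preimage_isClosed_of_isClosed isClosed_Icc isClosed_Iic
  have hSne : S.Nonempty := ⟨s, Set.mem_inter ⟨hps, le_rfl⟩ (by simp only [Set.mem_preimage, Set.mem_Iic]; exact le_of_lt hxs)⟩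
  have hSbdd : BddBelow S := ⟨lam0 - δ, fun l hl => hl.1.1⟩
  set lam := sInf S with hlamdef
  have hlamS : lam ∈ S := hSclosed.csInf_mem hSne hSbdd
  have hlam_lb : ∀ l ∈ S, lam ≤ l := fun l hl => csInf_le hSbdd hl
  have hlam_mem : lam ∈ Set.Icc (lam0 - δ) s := hlamS.1
  have hlam_np : G x lam ≤ 0 := hlamS.2
  have hplam : lam0 - δ < lam := by
    rcases eq_or_lt_of_le hlam_mem.1 with h1 | h1
    · exfalso
      have := hposK (lam0 - δ) ⟨haδ.le, le_rfl⟩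
      rw [h1] at this
      linarith
    · exact h1
  -- everything before `lam` in `[lam0-δ, lam)` is positive
  have h_not_before : ∀ l, lam0 - δ ≤ l → l < lam → 0 < G x l := by
    intro l hl1 hl2
    by_contra hneg
    push_neg at hneg
    have : l ∈ S := ⟨⟨hl1, le_trans hl2.le hlam_mem.2⟩, hneg⟩
    exact absurd (hlam_lb l this) (not_le.2 hl2)
  -- `G x lam = 0`
  have hlamzero : G x lam = 0 := by
    rcases eq_or_lt_of_le hlam_np with h1 | h1
    · exact h1
    · exfalso
      have hiv := intermediate_value_Ioo' hlam_mem.1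
        (hgcont.mono (Set.Icc_subset_Icc le_rfl hlam_mem.2))
      have h0mem : (0:ℝ) ∈ Set.Ioo (G x lam) (G x (lam0 - δ)) :=
        ⟨h1, hposK (lam0 - δ) ⟨haδ.le, le_rfl⟩⟩
      obtain ⟨z, hz, hgz⟩ := hiv h0mem
      have : z ∈ S := ⟨⟨hz.1.le, le_trans hz.2.le hlam_mem.2⟩, le_of_eq hgz⟩
      exact absurd (hlam_lb z this) (not_le.2 hz.2)
  refine ⟨lam, ⟨hplam, lt_of_le_of_lt hlam_mem.2 hs.2⟩, hlamzero, ?_⟩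
  intro l hl
  rcases le_or_gt l (lam0 - δ) with h1 | h1
  · exact hpos_small l hl.1 h1
  · exact h_not_before l h1.le hl.2
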